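/- Let W be the n × k matrix whose columns are v_1,...,v_k. If the quadratic program min_z (1/2) zᵀ Wᵀ W z subject to z_i ≥ 1 for all i has optimal value 0, and W has rank n, then {v_1,...,v_k} positively spans ℝ^n. -/
import Mathlib


open scoped BigOperators Matrix

/-- Positive span of the columns of a matrix (as vectors in `Fin n → ℝ`). -/
def PSpanCols {n k : ℕ} (W : Matrix (Fin n) (Fin k) ℝ) : Set (Fin n → ℝ) :=
  {w | ∃ l : Fin k → ℝ, (∀ i, 0 ≤ l i) ∧ ∑ i, l i • (fun j => W j i) = w}

theorem qp_optimal_value_zero_rank_full_implies_positive_span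
    {n k : ℕ} (W : Matrix (Fin n) (Fin k) ℝ)
    (hopt : IsLeast
      {c : ℝ | ∃ z : Fin k → ℝ, (∀ i, (1 : ℝ) ≤ z i) ∧
        c = (1 / 2) * (W.mulVec z ⬝ᵥ W.mulVec z)} 0)
    (hrank : W.rank = n) :
    PSpanCols W = Set.univ := by
  obtain ⟨⟨z, hz1, hz0⟩, -⟩ := hopt
  have hWz : W.mulVec z = 0 := by
    have h : W.mulVec z ⬝ᵥ W.mulVec z = 0 := by linarith
    exact dotProduct_self_eq_zero.mp h
  have hsurj : Function.Surjective W.mulVec := by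
    have htop : LinearMap.range W.mulVecLin = ⊤ := by
      apply Submodule.eq_top_of_finrank_eq
      rw [← Matrix.rank, hrank, Module.finrank_fintype_fun_eq_card, Fintype.card_fin]
    intro w
    have hw : w ∈ LinearMap.range W.mulVecLin := htop ▸ Submodule.mem_top
    exact hw
  ext w
  simp only [Set.mem_univ, iff_true, PSpanCols, Set.mem_setOf_eq]
  obtain ⟨y, hy⟩ := hsurj w
  set t : ℝ := ∑ j, |y j| with ht
  have ht0 : 0 ≤ t := Finset.sum_nonneg fun j _ => abs_nonneg _
  refine ⟨y + t • z, ?_, ?_⟩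
  · intro i
    have h1 : -y i ≤ t := by
      calc -y i ≤ |y i| := neg_le_abs _
        _ ≤ t := Finset.single_le_sum (f := fun j => |y j|)
              (fun j _ => abs_nonneg _) (Finset.mem_univ i)
    have h2 : t * 1 ≤ t * z i := mul_le_mul_of_nonneg_left (hz1 i) ht0
    simp only [Pi.add_apply, Pi.smul_apply, smul_eq_mul]
    nlinarith
  · funext j
    have : W.mulVec (y + t • z) = w := by
      rw [Matrix.mulVec_add, Matrix.mulVec_smul, hWz, hy]
      simp
    calc (∑ i, (y + t • z) i • (fun j => W j i)) j
        = ∑ i, W j i * (y + t • z) i := by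
          simp [Finset.sum_apply, mul_comm]
      _ = W.mulVec (y + t • z) j := rfl
      _ = w j := by rw [this]
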